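/- Let k < n and let A_1, …, A_k be n×n ASMs such that for all i, j, the partial vertical line (a_{ij1}, …, a_{ijk}) is (1,*)-alternating. Then there exist n×n permutation matrices A_{k+1}, …, A_n such that [A_1, …, A_k, A_{k+1}, …, A_n] is an n×n×n ASHM. -/

import Mathlib

open Finset

/-- A line (vector) of integers is "alternating" in the ASM sense:
all prefix sums are 0 or 1, and the total sum is 1. This is equivalent to the
nonzero entries being ±1, alternating in sign, beginning and ending with +1. -/
def AltLine {n : ℕ} (v : Fin n → ℤ) : Prop :=
  (∀ t : Fin n, (∑ s ∈ Finset.univ.filter (fun s => s ≤ t), v s) = 0 ∨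
      (∑ s ∈ Finset.univ.filter (fun s => s ≤ t), v s) = 1) ∧
  (∑ s, v s) = 1

/-- Alternating sign matrix. -/
def IsAsm {n : ℕ} (A : Matrix (Fin n) (Fin n) ℤ) : Prop :=
  (∀ i, AltLine (fun j => A i j)) ∧ (∀ j, AltLine (fun i => A i j))

/-- Alternating sign hypermatrix: every line in each of the three directions alternates. -/
def IsAshm {n : ℕ} (A : Fin n → Fin n → Fin n → ℤ) : Prop :=
  (∀ j k, AltLine (fun i => A i j k)) ∧
  (∀ i k, AltLine (fun j => A i j k)) ∧
  (∀ i j, AltLine (fun k => A i j k))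

/-- The ASHM-Latin square `L(A) = 1·A₁ + 2·A₂ + ⋯ + n·Aₙ` (planes indexed from 1). -/
def Lmat {n : ℕ} (A : Fin n → Fin n → Fin n → ℤ) (i j : Fin n) : ℤ :=
  ∑ k : Fin n, ((k.1 : ℤ) + 1) * A i j k

lemma altLine_single {n : ℕ} (j0 : Fin n) : AltLine (fun j => if j0 = j then (1:ℤ) else 0) := by
  constructor
  · intro t
    rw [Finset.sum_ite_eq]
    by_cases h : j0 ∈ univ.filter (fun s => s ≤ t) <;> simp [h]
  · simp

lemma exists_perm_of_pos {n m : ℕ} (M : Matrix (Fin n) (Fin n) ℤ) (hpos : ∀ i j, 0 ≤ M i j)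
    (hrow : ∀ i, ∑ j, M i j = m + 1) (hcol : ∀ j, ∑ i, M i j = m + 1) :
    ∃ σ : Equiv.Perm (Fin n), ∀ i, 1 ≤ M i (σ i) := by
  classical
  set t : Fin n → Finset (Fin n) := fun i => univ.filter (fun j => 0 < M i j) with ht
  have hall : ∀ s : Finset (Fin n), #s ≤ #(s.biUnion t) := by
    intro s
    have key : (#s : ℤ) * (m + 1) ≤ (#(s.biUnion t) : ℤ) * (m + 1) := by
      calc (#s : ℤ) * (m+1) = ∑ i ∈ s, ∑ j, M i j := by
            rw [Finset.sum_congr rfl (fun i _ => hrow i)]; simp [mul_comm]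
        _ = ∑ i ∈ s, ∑ j ∈ t i, M i j := by
            refine Finset.sum_congr rfl (fun i _ => ?_)
            refine (Finset.sum_subset (Finset.subset_univ _) ?_).symm
            intro j _ hj
            have := hpos i j
            simp [ht] at hj
            omega
        _ ≤ ∑ i ∈ s, ∑ j ∈ s.biUnion t, M i j := by
            refine Finset.sum_le_sum (fun i hi => ?_)
            refine Finset.sum_le_sum_of_subset_of_nonneg ?_ (fun j _ _ => hpos i j)
            exact Finset.subset_biUnion_of_mem t hi
        _ = ∑ j ∈ s.biUnion t, ∑ i ∈ s, M i j := Finset.sum_comm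
        _ ≤ ∑ j ∈ s.biUnion t, (m + 1 : ℤ) := by
            refine Finset.sum_le_sum (fun j _ => ?_)
            rw [← hcol j]
            exact Finset.sum_le_sum_of_subset_of_nonneg (Finset.subset_univ _)
              (fun i _ _ => hpos i j)
        _ = (#(s.biUnion t) : ℤ) * (m + 1) := by simp [mul_comm]
    have : (#s : ℤ) ≤ #(s.biUnion t) := le_of_mul_le_mul_right key (by positivity)
    exact_mod_cast this
  obtain ⟨f, hf, hmem⟩ := (Finset.all_card_le_biUnion_card_iff_exists_injective t).mp hall
  refine ⟨Equiv.ofBijective f ((Finite.injective_iff_bijective).mp hf), fun i => ?_⟩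
  have := hmem i
  simp only [ht, Finset.mem_filter] at this
  have : 0 < M i (f i) := this.2
  have h1 : 1 ≤ M i (f i) := by omega
  simpa [Equiv.ofBijective] using h1

lemma decomp {n : ℕ} (m : ℕ) (M : Matrix (Fin n) (Fin n) ℤ) (hpos : ∀ i j, 0 ≤ M i j)
    (hrow : ∀ i, ∑ j, M i j = m) (hcol : ∀ j, ∑ i, M i j = m) :
    ∃ σ : Fin m → Equiv.Perm (Fin n),
      ∀ i j, M i j = ∑ s : Fin m, (if σ s i = j then (1:ℤ) else 0) := by
  classical
  induction m generalizing M with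
  | zero =>
    refine ⟨fun s => s.elim0, fun i j => ?_⟩
    simp only [Finset.univ_eq_empty, Finset.sum_empty]
    have h1 : ∑ j, M i j = 0 := by exact_mod_cast hrow i
    have := Finset.sum_eq_zero_iff_of_nonneg (fun j _ => hpos i j) |>.mp h1 j (mem_univ j)
    exact this
  | succ m ih =>
    obtain ⟨σ0, hσ0⟩ := exists_perm_of_pos M hpos (by exact_mod_cast hrow) (by exact_mod_cast hcol)
    set M' : Matrix (Fin n) (Fin n) ℤ := fun i j => M i j - if σ0 i = j then 1 else 0 with hM'
    have hpos' : ∀ i j, 0 ≤ M' i j := by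
      intro i j
      by_cases h : σ0 i = j
      · simp [hM', h]; have := hσ0 i; rw [h] at this; omega
      · simp [hM', h]; exact hpos i j
    have hrow' : ∀ i, ∑ j, M' i j = m := by
      intro i
      simp only [hM', Finset.sum_sub_distrib, Finset.sum_ite_eq, mem_univ, if_true]
      have := hrow i; push_cast at this ⊢; omega
    have hcol' : ∀ j, ∑ i, M' i j = m := by
      intro j
      have h1 : ∑ i, (if σ0 i = j then (1:ℤ) else 0) = 1 := by
        rw [Finset.sum_congr rfl (g := fun i => if i = σ0.symm j then (1:ℤ) else 0)
          (fun i _ => by simp [Equiv.apply_eq_iff_eq_symm_apply])]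
        simp
      simp only [hM', Finset.sum_sub_distrib, h1]
      have := hcol j; push_cast at this ⊢; omega
    obtain ⟨σ, hσ⟩ := ih M' hpos' hrow' hcol'
    refine ⟨Fin.cons σ0 σ, fun i j => ?_⟩
    rw [Fin.sum_univ_succ]
    simp only [Fin.cons_zero, Fin.cons_succ]
    rw [← hσ i j]
    simp [hM']

set_option maxHeartbeats 1000000 in
theorem stmt14 {n k : ℕ} (hk : k < n) (A : Fin n → Fin n → Fin n → ℤ)
    (hASM : ∀ s : Fin n, s.1 < k → IsAsm (fun i j => A i j s))
    (halt : ∀ i j : Fin n, ∀ t : Fin n, t.1 < k →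
        (∑ s ∈ Finset.univ.filter (fun s : Fin n => s ≤ t), A i j s) = 0 ∨
        (∑ s ∈ Finset.univ.filter (fun s : Fin n => s ≤ t), A i j s) = 1) :
    ∃ B : Fin n → Fin n → Fin n → ℤ, IsAshm B ∧
      (∀ s : Fin n, s.1 < k → ∀ i j : Fin n, B i j s = A i j s) ∧
      (∀ s : Fin n, k ≤ s.1 → ∃ σ : Equiv.Perm (Fin n), ∀ i j : Fin n,
          B i j s = if σ i = j then (1 : ℤ) else 0) := by
  classical
  set F : Finset (Fin n) := univ.filter (fun s : Fin n => s.1 < k) with hF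
  set S : Fin n → Fin n → ℤ := fun i j => ∑ s ∈ F, A i j s with hSdef
  have hFcard : #F = k := by
    have : F = Finset.Iio (⟨k, hk⟩ : Fin n) := by
      ext s; simp [hF, Fin.lt_def]
    rw [this, Fin.card_Iio]
  have hS01 : ∀ i j, S i j = 0 ∨ S i j = 1 := by
    intro i j
    rcases Nat.eq_zero_or_pos k with hk0 | hk0
    · left; simp [hSdef, hF, hk0]
    · have hF2 : F = univ.filter (fun s : Fin n => s ≤ ⟨k - 1, by omega⟩) := by
        ext s; simp [hF, Fin.le_def]; omega
      rw [hSdef]; simp only; rw [hF2]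
      exact halt i j ⟨k - 1, by omega⟩ (by simp; omega)
  have hSrow : ∀ i, ∑ j, S i j = (k : ℤ) := by
    intro i
    rw [hSdef]; simp only
    rw [Finset.sum_comm]
    rw [Finset.sum_congr rfl (fun s hs => ((hASM s (by simpa [hF] using hs)).1 i).2)]
    simp [hFcard]
  have hScol : ∀ j, ∑ i, S i j = (k : ℤ) := by
    intro j
    rw [hSdef]; simp only
    rw [Finset.sum_comm]
    rw [Finset.sum_congr rfl (fun s hs => ((hASM s (by simpa [hF] using hs)).2 j).2)]
    simp [hFcard]
  set T : Matrix (Fin n) (Fin n) ℤ := fun i j => 1 - S i j with hTdef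
  have hTpos : ∀ i j, 0 ≤ T i j := by
    intro i j; rcases hS01 i j with h | h <;> simp [hTdef, h]
  have hTrow : ∀ i, ∑ j, T i j = ((n - k : ℕ) : ℤ) := by
    intro i; simp [hTdef, Finset.sum_sub_distrib, hSrow i]; push_cast [Nat.cast_sub hk.le]; ring
  have hTcol : ∀ j, ∑ i, T i j = ((n - k : ℕ) : ℤ) := by
    intro j; simp [hTdef, Finset.sum_sub_distrib, hScol j]; push_cast [Nat.cast_sub hk.le]; ring
  obtain ⟨σ, hσ⟩ := decomp (n - k) T hTpos hTrow hTcol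
  set ind : Fin n → Fin (n - k) := fun s => ⟨s.1 - k, by omega⟩ with hind
  set B : Fin n → Fin n → Fin n → ℤ := fun i j s =>
    if s.1 < k then A i j s else (if σ (ind s) i = j then 1 else 0) with hB
  -- reindexing: sum of indicators over the non-ASM planes equals T
  have hmap : univ.filter (fun s : Fin n => ¬ s.1 < k) =
      Finset.map ⟨fun u : Fin (n - k) => (⟨u.1 + k, by omega⟩ : Fin n),
        fun ⦃a b⦄ hab => by simpa [Fin.ext_iff] using hab⟩ univ := by
    ext s
    simp only [Finset.mem_filter, Finset.mem_map, Finset.mem_univ, true_and,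
      Function.Embedding.coeFn_mk, Fin.ext_iff]
    constructor
    · intro h; exact ⟨⟨s.1 - k, by omega⟩, by show s.1 - k + k = s.1; omega⟩
    · rintro ⟨u, hu⟩; have hu' : u.1 + k = s.1 := hu; omega
  have hT' : ∀ i j, ∑ s ∈ univ.filter (fun s : Fin n => ¬ s.1 < k),
      (if σ (ind s) i = j then (1:ℤ) else 0) = T i j := by
    intro i j
    rw [hmap, Finset.sum_map, hσ i j]
    refine Finset.sum_congr rfl (fun u _ => ?_)
    have : ind ⟨u.1 + k, by omega⟩ = u := by simp [hind, Fin.ext_iff]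
    show (if σ (ind ⟨u.1 + k, by omega⟩) i = j then (1:ℤ) else 0) = _
    rw [this]
  refine ⟨B, ⟨?_, ?_, ?_⟩, ?_, ?_⟩
  · -- columns (lines in i)
    intro j s
    by_cases hs : s.1 < k
    · have : (fun i => B i j s) = fun i => A i j s := funext fun i => if_pos hs
      rw [this]; exact (hASM s hs).2 j
    · have : (fun i => B i j s) = fun i => if (σ (ind s)).symm j = i then (1:ℤ) else 0 := by
        funext i
        show (if s.1 < k then A i j s else (if σ (ind s) i = j then (1:ℤ) else 0))
          = if (σ (ind s)).symm j = i then (1:ℤ) else 0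
        rw [if_neg hs]
        by_cases h : σ (ind s) i = j
        · rw [if_pos h, if_pos (by rw [← h]; exact Equiv.symm_apply_apply _ _)]
        · rw [if_neg h, if_neg (fun hc => h (by rw [← hc]; exact Equiv.apply_symm_apply _ _))]
      rw [this]; exact altLine_single _
  · -- rows (lines in j)
    intro i s
    by_cases hs : s.1 < k
    · have : (fun j => B i j s) = fun j => A i j s := funext fun j => if_pos hs
      rw [this]; exact (hASM s hs).1 i
    · have : (fun j => B i j s) = fun j => if σ (ind s) i = j then (1:ℤ) else 0 :=
        funext fun j => if_neg hs
      rw [this]; exact altLine_single _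
  · -- vertical lines
    intro i j
    constructor
    · intro t
      by_cases ht : t.1 < k
      · have he : ∑ s ∈ univ.filter (fun s => s ≤ t), B i j s
            = ∑ s ∈ univ.filter (fun s => s ≤ t), A i j s := by
          refine Finset.sum_congr rfl (fun s hs => ?_)
          simp only [Finset.mem_filter, Fin.le_def] at hs
          exact if_pos (by omega)
        rw [he]; exact halt i j t ht
      · rw [← Finset.sum_filter_add_sum_filter_not (univ.filter (fun s => s ≤ t))
          (fun s => s.1 < k) (fun s => B i j s)]
        have h1 : (univ.filter (fun s : Fin n => s ≤ t)).filter (fun s => s.1 < k) = F := by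
          ext s
          simp only [hF, Finset.mem_filter, Finset.mem_univ, true_and, Fin.le_def]
          omega
        have h2 : ∑ s ∈ F, B i j s = S i j := by
          refine Finset.sum_congr rfl (fun s hs => ?_)
          simp only [hF, Finset.mem_filter] at hs
          exact if_pos hs.2
        have h3 : ∀ s ∈ (univ.filter (fun s : Fin n => s ≤ t)).filter (fun s => ¬ s.1 < k),
            B i j s = (if σ (ind s) i = j then (1:ℤ) else 0) := by
          intro s hs
          simp only [Finset.mem_filter] at hs
          exact if_neg hs.2
        rw [h1, h2, Finset.sum_congr rfl h3]
        have hE0 : 0 ≤ ∑ s ∈ (univ.filter (fun s : Fin n => s ≤ t)).filter (fun s => ¬ s.1 < k),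
            (if σ (ind s) i = j then (1:ℤ) else 0) :=
          Finset.sum_nonneg (fun s _ => by positivity)
        have hET : ∑ s ∈ (univ.filter (fun s : Fin n => s ≤ t)).filter (fun s => ¬ s.1 < k),
            (if σ (ind s) i = j then (1:ℤ) else 0) ≤ T i j := by
          rw [← hT' i j]
          refine Finset.sum_le_sum_of_subset_of_nonneg ?_ (fun s _ _ => by positivity)
          intro s hs
          simp only [Finset.mem_filter] at hs ⊢
          exact ⟨Finset.mem_univ s, hs.2⟩
        have hT1 : T i j = 1 - S i j := rfl
        rw [hT1] at hET
        rcases hS01 i j with h | h <;> omega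
    · rw [← Finset.sum_filter_add_sum_filter_not univ (fun s : Fin n => s.1 < k)
        (fun s => B i j s)]
      have h2 : ∑ s ∈ F, B i j s = S i j := by
        refine Finset.sum_congr rfl (fun s hs => ?_)
        simp only [hF, Finset.mem_filter] at hs
        exact if_pos hs.2
      have h3 : ∑ s ∈ univ.filter (fun s : Fin n => ¬ s.1 < k), B i j s = T i j := by
        rw [← hT' i j]
        refine Finset.sum_congr rfl (fun s hs => ?_)
        simp only [Finset.mem_filter] at hs
        exact if_neg hs.2
      rw [show univ.filter (fun s : Fin n => s.1 < k) = F from rfl, h2, h3]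
      have hT1 : T i j = 1 - S i j := rfl
      omega
  · intro s hs i j; exact if_pos hs
  · intro s hs
    exact ⟨σ (ind s), fun i j => if_neg (not_lt.mpr hs)⟩
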